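/- (Necessity in Theorem 2, part 1.) Suppose λ_min is a simple eigenvalue of G (its eigenspace is one-dimensional) and the equal-probability measurement is optimal, i.e. Σ_i η_i p_i ≤ λ_min for every primal feasible p. Then every unit vector u ∈ ℂ^m with G u = λ_min u satisfies |u_i|² = η_i for all 1 ≤ i ≤ m. -/

import Mathlib

open Matrix BigOperators ComplexOrder

noncomputable section

/-- The reciprocal states: columns of `Φ (ΦᴴΦ)⁻¹`. -/
def reciprocal {r m : ℕ} (Φ : Matrix (Fin r) (Fin m) ℂ) : Matrix (Fin r) (Fin m) ℂ :=
  Φ * (Φᴴ * Φ)⁻¹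

/-- The rank-one operator `Q_i = φ̃_i φ̃_iᴴ`. -/
def Qop {r m : ℕ} (Φ : Matrix (Fin r) (Fin m) ℂ) (i : Fin m) : Matrix (Fin r) (Fin r) ℂ :=
  vecMulVec (fun a => reciprocal Φ a i) (fun b => star (reciprocal Φ b i))

/-- `p` is primal feasible: `p_i ≥ 0` and `I - Σ p_i Q_i ⪰ 0`. -/
def PrimalFeasible {r m : ℕ} (Φ : Matrix (Fin r) (Fin m) ℂ) (p : Fin m → ℝ) : Prop :=
  (∀ i, 0 ≤ p i) ∧
    ((1 : Matrix (Fin r) (Fin r) ℂ) - ∑ i : Fin m, (p i : ℂ) • Qop Φ i).PosSemidef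

/-- `(X, z)` is dual feasible: `X ⪰ 0`, `z_i ≥ 0` and `Re Tr(Q_i X) = η_i + z_i`. -/
def DualFeasible {r m : ℕ} (Φ : Matrix (Fin r) (Fin m) ℂ) (η : Fin m → ℝ)
    (X : Matrix (Fin r) (Fin r) ℂ) (z : Fin m → ℝ) : Prop :=
  X.PosSemidef ∧ (∀ i, 0 ≤ z i) ∧ ∀ i, (Matrix.trace (Qop Φ i * X)).re = η i + z i

/-- real quadratic form of a complex matrix -/
def qf {k : ℕ} (A : Matrix (Fin k) (Fin k) ℂ) (x : Fin k → ℂ) : ℝ :=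
  (star x ⬝ᵥ A.mulVec x).re

lemma herm_quad_real {k : ℕ} {A : Matrix (Fin k) (Fin k) ℂ} (hA : A.IsHermitian)
    (x : Fin k → ℂ) : (star x ⬝ᵥ A.mulVec x).im = 0 := by
  have h : star (star x ⬝ᵥ A.mulVec x) = star x ⬝ᵥ A.mulVec x := by
    calc star (star x ⬝ᵥ A.mulVec x) = star (A.mulVec x) ⬝ᵥ x := (star_dotProduct _ _).symm
      _ = (star x ᵥ* Aᴴ) ⬝ᵥ x := by rw [star_mulVec]
      _ = (star x ᵥ* A) ⬝ᵥ x := by rw [hA.eq]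
      _ = star x ⬝ᵥ A.mulVec x := (dotProduct_mulVec _ _ _).symm
  have := congrArg Complex.im h
  simp only [Complex.star_def, Complex.conj_im] at this
  linarith

lemma posSemidef_of_herm {k : ℕ} {A : Matrix (Fin k) (Fin k) ℂ} (hA : A.IsHermitian)
    (h : ∀ x, 0 ≤ qf A x) : A.PosSemidef := by
  refine .of_dotProduct_mulVec_nonneg hA fun x => ?_
  rw [Complex.le_def]
  exact ⟨by simpa [qf] using h x, by simpa using (herm_quad_real hA x).symm⟩

lemma not_posSemidef_herm {k : ℕ} {A : Matrix (Fin k) (Fin k) ℂ} (hA : A.IsHermitian)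
    (h : ¬ A.PosSemidef) : ∃ x, qf A x < 0 := by
  by_contra hc
  push_neg at hc
  exact h (posSemidef_of_herm hA fun x => hc x)

lemma qf_continuous {k : ℕ} (A : Matrix (Fin k) (Fin k) ℂ) : Continuous (qf A) := by
  unfold qf
  simp only [Matrix.mulVec, dotProduct]
  fun_prop

lemma qf_smul {k : ℕ} (A : Matrix (Fin k) (Fin k) ℂ) (a : ℂ) (x : Fin k → ℂ) :
    qf A (a • x) = Complex.normSq a * qf A x := by
  unfold qf
  rw [mulVec_smul, star_smul, smul_dotProduct, dotProduct_smul]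
  simp only [smul_eq_mul, ← mul_assoc, Complex.star_def, Complex.mul_conj']
  rw [mul_comm ((starRingEnd ℂ) a) a, Complex.mul_conj]
  simp

lemma qf_sub_smul {k : ℕ} (A B : Matrix (Fin k) (Fin k) ℂ) (t : ℝ) (x : Fin k → ℂ) :
    qf (A - (t : ℂ) • B) x = qf A x - t * qf B x := by
  unfold qf
  rw [sub_mulVec, smul_mulVec, dotProduct_sub, dotProduct_smul]
  simp [Complex.sub_re, Complex.re_ofReal_mul]

lemma qf_diagonal {k : ℕ} (c : Fin k → ℝ) (x : Fin k → ℂ) :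
    qf (diagonal fun j => (c j : ℂ)) x = ∑ j, c j * ‖x j‖ ^ 2 := by
  unfold qf
  simp only [dotProduct, Matrix.mulVec_diagonal, Complex.re_sum, Pi.star_apply]
  apply Finset.sum_congr rfl
  intro j _
  have h : star (x j) * ((c j : ℂ) * x j) = (c j : ℂ) * (x j * star (x j)) := by ring
  rw [h, Complex.star_def, Complex.mul_conj, Complex.re_ofReal_mul, Complex.ofReal_re,
    Complex.sq_norm]

lemma psd_smul {k : ℕ} {A : Matrix (Fin k) (Fin k) ℂ} (hA : A.PosSemidef) {t : ℝ}
    (ht : 0 ≤ t) : ((t : ℂ) • A).PosSemidef := by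
  refine posSemidef_of_herm ?_ fun x => ?_
  · unfold Matrix.IsHermitian
    rw [conjTranspose_smul, hA.1.eq]
    congr 1
    simp
  · have h : qf ((t : ℂ) • A) x = t * qf A x := by
      unfold qf
      rw [smul_mulVec, dotProduct_smul]
      simp [Complex.re_ofReal_mul]
    rw [h]
    exact mul_nonneg ht (hA.re_dotProduct_nonneg x)

lemma herm_sub_smul {k : ℕ} {A B : Matrix (Fin k) (Fin k) ℂ} (hA : A.IsHermitian)
    (hB : B.IsHermitian) (t : ℝ) : (A - (t : ℂ) • B).IsHermitian := by
  unfold Matrix.IsHermitian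
  rw [conjTranspose_sub, hA.eq, conjTranspose_smul, hB.eq]
  congr 2
  simp

/-- Key perturbation lemma. -/
lemma key_perturb {k : ℕ} {M C : Matrix (Fin k) (Fin k) ℂ} (hM : M.PosSemidef)
    (hC : C.IsHermitian)
    (hker : ∀ x : Fin k → ℂ, x ≠ 0 → M.mulVec x = 0 → qf C x < 0) :
    ∃ t : ℝ, 0 < t ∧ (M - (t : ℂ) • C).PosSemidef := by
  by_contra h
  push_neg at h
  have hsel : ∀ n : ℕ, ∃ y : Fin k → ℂ, ‖y‖ = 1 ∧
      qf M y < (1 / (n + 1 : ℝ)) * qf C y := by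
    intro n
    set t : ℝ := 1 / (n + 1 : ℝ) with ht
    have htpos : 0 < t := by positivity
    obtain ⟨x, hx⟩ := not_posSemidef_herm (herm_sub_smul hM.1 hC t) (h t htpos)
    rw [qf_sub_smul] at hx
    have hx0 : x ≠ 0 := by
      rintro rfl
      simp [qf] at hx
    have hnx : (0 : ℝ) < ‖x‖ := norm_pos_iff.mpr hx0
    refine ⟨(‖x‖⁻¹ : ℂ) • x, ?_, ?_⟩
    · rw [norm_smul]
      simp [hnx.ne']
    · rw [qf_smul, qf_smul]
      have hpos : (0 : ℝ) < Complex.normSq (((‖x‖ : ℂ))⁻¹) := by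
        rw [Complex.normSq_inv, Complex.normSq_ofReal]
        positivity
      nlinarith [hx]
  choose y hy1 hy2 using hsel
  have hmem : ∀ n, y n ∈ Metric.sphere (0 : Fin k → ℂ) 1 := by
    intro n
    rw [mem_sphere_zero_iff_norm]
    exact hy1 n
  obtain ⟨z, hz, φ, hφ, hlim⟩ :=
    (isCompact_sphere (0 : Fin k → ℂ) 1).tendsto_subseq hmem
  have hz1 : ‖z‖ = 1 := mem_sphere_zero_iff_norm.mp hz
  have hz0 : z ≠ 0 := by
    intro h0
    rw [h0, norm_zero] at hz1
    norm_num at hz1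
  have hlimM : Filter.Tendsto (fun n => qf M (y (φ n))) Filter.atTop (nhds (qf M z)) :=
    ((qf_continuous M).continuousAt.tendsto.comp hlim)
  have hlimC : Filter.Tendsto (fun n => qf C (y (φ n))) Filter.atTop (nhds (qf C z)) :=
    ((qf_continuous C).continuousAt.tendsto.comp hlim)
  have hlimt : Filter.Tendsto (fun n => (1 / ((φ n : ℝ) + 1))) Filter.atTop (nhds 0) := by
    apply tendsto_one_div_add_atTop_nhds_zero_nat.comp
    exact hφ.tendsto_atTop
  have hle : qf M z ≤ 0 := by
    have h2 := hlimt.mul hlimC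
    rw [zero_mul] at h2
    exact le_of_tendsto_of_tendsto' hlimM h2 fun n => (hy2 (φ n)).le
  have hge : 0 ≤ qf M z := hM.re_dotProduct_nonneg z
  have hMz : M.mulVec z = 0 := by
    rw [← hM.dotProduct_mulVec_zero_iff]
    apply Complex.ext
    · simpa [qf] using le_antisymm hle hge
    · simpa using herm_quad_real hM.1 z
  have hCz : qf C z < 0 := hker z hz0 hMz
  have hev : ∀ᶠ n in Filter.atTop, qf C (y (φ n)) < 0 :=
    hlimC.eventually (eventually_lt_nhds hCz)
  obtain ⟨n, hn⟩ := hev.exists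
  have h1 : (0:ℝ) < 1 / ((φ n : ℝ) + 1) := by positivity
  have h2 := hy2 (φ n)
  have hM0 : 0 ≤ qf M (y (φ n)) := hM.re_dotProduct_nonneg (y (φ n))
  nlinarith [h2, hn, hM0, h1]

section gram
variable {r m : ℕ} (Φ : Matrix (Fin r) (Fin m) ℂ)

lemma gram_mulVec_injective
    (hind : LinearIndependent ℂ (fun i : Fin m => fun j : Fin r => Φ j i)) :
    Function.Injective ((Φᴴ * Φ).mulVec) := by
  have hker : ∀ x, (Φᴴ * Φ).mulVec x = 0 → x = 0 := by
    intro x hx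
    have h1 : star x ⬝ᵥ (Φᴴ * Φ).mulVec x = 0 := by rw [hx, dotProduct_zero]
    rw [← Matrix.mulVec_mulVec, dotProduct_mulVec, ← star_mulVec,
      dotProduct_star_self_eq_zero] at h1
    have h2 := Fintype.linearIndependent_iff.mp hind x ?_
    · funext i; exact h2 i
    · funext j
      have := congrFun h1 j
      simpa [Matrix.mulVec, dotProduct, mul_comm] using this
  intro a b hab
  have h3 : (Φᴴ * Φ).mulVec (a - b) = 0 := by
    rw [Matrix.mulVec_sub, hab, sub_self]
  exact sub_eq_zero.mp (hker _ h3)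

lemma gram_inv_mul
    (hind : LinearIndependent ℂ (fun i : Fin m => fun j : Fin r => Φ j i)) :
    (Φᴴ * Φ)⁻¹ * (Φᴴ * Φ) = 1 := by
  refine Matrix.nonsing_inv_mul _ ?_
  rw [← Matrix.isUnit_iff_isUnit_det]
  exact Matrix.mulVec_injective_iff_isUnit.mp (gram_mulVec_injective Φ hind)

lemma recip_conjT : (reciprocal Φ)ᴴ = (Φᴴ * Φ)⁻¹ * Φᴴ := by
  unfold reciprocal
  rw [conjTranspose_mul, (Matrix.isHermitian_conjTranspose_mul_self Φ).inv.eq]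

lemma recipT_mul_phi
    (hind : LinearIndependent ℂ (fun i : Fin m => fun j : Fin r => Φ j i)) :
    (reciprocal Φ)ᴴ * Φ = 1 := by
  rw [recip_conjT, Matrix.mul_assoc, gram_inv_mul Φ hind]

lemma recip_mul_gram
    (hind : LinearIndependent ℂ (fun i : Fin m => fun j : Fin r => Φ j i)) :
    reciprocal Φ * (Φᴴ * Φ) = Φ := by
  unfold reciprocal
  rw [Matrix.mul_assoc, gram_inv_mul Φ hind, Matrix.mul_one]

lemma sum_Qop (p : Fin m → ℝ) :
    ∑ i : Fin m, (p i : ℂ) • Qop Φ i =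
      reciprocal Φ * diagonal (fun i => (p i : ℂ)) * (reciprocal Φ)ᴴ := by
  ext a b
  rw [Matrix.sum_apply]
  rw [Matrix.mul_apply]
  simp only [Qop, vecMulVec_apply, Matrix.smul_apply, smul_eq_mul,
    Matrix.mul_diagonal, conjTranspose_apply, Matrix.mul_diagonal]
  · apply Finset.sum_congr rfl
    intro i _
    ring

lemma primal_of_psd
    (hind : LinearIndependent ℂ (fun i : Fin m => fun j : Fin r => Φ j i))
    (p : Fin m → ℝ) (hp : ∀ i, 0 ≤ p i)
    (hpsd : (Φᴴ * Φ - diagonal (fun i => (p i : ℂ))).PosSemidef) :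
    PrimalFeasible Φ p := by
  refine ⟨hp, ?_⟩
  set Ψ := reciprocal Φ with hΨ
  set P : Matrix (Fin r) (Fin r) ℂ := Φ * Ψᴴ with hPdef
  have hB : Ψᴴ * Φ = 1 := recipT_mul_phi Φ hind
  have hA : Ψ * (Φᴴ * Φ) = Φ := recip_mul_gram Φ hind
  have hPH : Pᴴ = P := by
    rw [hPdef, conjTranspose_mul, conjTranspose_conjTranspose]
    rw [hΨ, recip_conjT, ← Matrix.mul_assoc]
    unfold reciprocal
    rfl
  have hPP : P * P = P := by
    rw [hPdef, Matrix.mul_assoc, ← Matrix.mul_assoc Ψᴴ, hB, Matrix.one_mul]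
  have hdecomp : (1 : Matrix (Fin r) (Fin r) ℂ) - ∑ i : Fin m, (p i : ℂ) • Qop Φ i
      = (1 - P)ᴴ * (1 - P) + Ψ * (Φᴴ * Φ - diagonal (fun i => (p i : ℂ))) * Ψᴴ := by
    rw [sum_Qop]
    have h1 : (1 - P)ᴴ * (1 - P) = 1 - P := by
      rw [conjTranspose_sub, conjTranspose_one, hPH, Matrix.sub_mul, Matrix.mul_sub,
        Matrix.mul_sub, Matrix.one_mul, Matrix.one_mul, Matrix.mul_one, hPP]
      abel
    have h2 : Ψ * (Φᴴ * Φ - diagonal (fun i => (p i : ℂ))) * Ψᴴ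
        = P - Ψ * diagonal (fun i => (p i : ℂ)) * Ψᴴ := by
      rw [Matrix.mul_sub, Matrix.sub_mul, hA]
    rw [h1, h2]
    abel
  rw [hdecomp]
  exact (Matrix.posSemidef_conjTranspose_mul_self _).add (hpsd.mul_mul_conjTranspose_same Ψ)

end gram

theorem stmt_9 (m r : ℕ) (hm : 0 < m) (hmr : m ≤ r)
    (Φ : Matrix (Fin r) (Fin m) ℂ)
    (hind : LinearIndependent ℂ (fun i : Fin m => fun j : Fin r => Φ j i))
    (η : Fin m → ℝ) (hη : ∀ i, 0 ≤ η i) (hη1 : ∑ i : Fin m, η i = 1)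
    (lam : ℝ)
    -- `lam` is the smallest eigenvalue of the Gram matrix `ΦᴴΦ`:
    (hev : ∃ u : Fin m → ℂ, u ≠ 0 ∧ (Φᴴ * Φ).mulVec u = (lam : ℂ) • u)
    (hmin : ((Φᴴ * Φ) - (lam : ℂ) • 1).PosSemidef)
    -- `lam` is a simple eigenvalue: its eigenspace is one-dimensional:
    (hsimple : ∀ v w : Fin m → ℂ, v ≠ 0 →
      (Φᴴ * Φ).mulVec v = (lam : ℂ) • v → (Φᴴ * Φ).mulVec w = (lam : ℂ) • w →
      ∃ c : ℂ, w = c • v)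
    -- the EPM is optimal:
    (hopt : ∀ p : Fin m → ℝ, PrimalFeasible Φ p → ∑ i : Fin m, η i * p i ≤ lam) :
    ∀ u : Fin m → ℂ, (∑ i : Fin m, ‖u i‖ ^ 2 = 1) →
      (Φᴴ * Φ).mulVec u = (lam : ℂ) • u →
      ∀ i : Fin m, ‖u i‖ ^ 2 = η i := by
  intro u hu hGu i
  have hu0 : u ≠ 0 := by
    rintro rfl
    simp at hu
  -- lam is positive
  have hlam : 0 < lam := by
    obtain ⟨u₀, hu₀ne, hu₀⟩ := hev
    have hs0 : (0 : ℂ) ≤ star u₀ ⬝ᵥ u₀ := dotProduct_star_self_nonneg u₀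
    have hsne : star u₀ ⬝ᵥ u₀ ≠ 0 := fun h => hu₀ne (dotProduct_star_self_eq_zero.mp h)
    rw [Complex.le_def] at hs0
    have hsre : 0 < (star u₀ ⬝ᵥ u₀).re := by
      rcases lt_or_eq_of_le hs0.1 with h | h
      · simpa using h
      · exfalso
        apply hsne
        apply Complex.ext
        · simpa using h.symm
        · simpa using hs0.2.symm
    have hq : (star u₀ ⬝ᵥ (Φᴴ * Φ).mulVec u₀).re = lam * (star u₀ ⬝ᵥ u₀).re := by
      rw [hu₀, dotProduct_smul]
      simp [Complex.re_ofReal_mul]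
    have hq0 : 0 ≤ (star u₀ ⬝ᵥ (Φᴴ * Φ).mulVec u₀).re :=
      (Matrix.posSemidef_conjTranspose_mul_self Φ).re_dotProduct_nonneg u₀
    have hlam0 : 0 ≤ lam := by nlinarith
    rcases lt_or_eq_of_le hlam0 with h | h
    · exact h
    · exfalso
      apply hu₀ne
      have hz : (Φᴴ * Φ).mulVec u₀ = (Φᴴ * Φ).mulVec 0 := by
        rw [Matrix.mulVec_zero, hu₀, ← h]
        simp
      exact gram_mulVec_injective Φ hind hz
  -- Step A
  have stepA : ∀ c : Fin m → ℝ, (∑ j, c j * ‖u j‖ ^ 2) < 0 → (∑ j, η j * c j) ≤ 0 := by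
    intro c hc
    set C : Matrix (Fin m) (Fin m) ℂ := diagonal (fun j => (c j : ℂ)) with hC
    have hCH : C.IsHermitian := by
      rw [hC]
      exact Matrix.isHermitian_diagonal_iff.mpr fun j => Complex.conj_ofReal (c j)
    have hker : ∀ x : Fin m → ℂ, x ≠ 0 →
        ((Φᴴ * Φ) - (lam : ℂ) • 1).mulVec x = 0 → qf C x < 0 := by
      intro x hx0 hMx
      have hGx : (Φᴴ * Φ).mulVec x = (lam : ℂ) • x := by
        rw [Matrix.sub_mulVec, smul_mulVec, Matrix.one_mulVec] at hMx
        exact sub_eq_zero.mp hMx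
      obtain ⟨c₀, rfl⟩ := hsimple u x hu0 hGu hGx
      have hc₀ : c₀ ≠ 0 := by
        rintro rfl
        simp at hx0
      rw [hC, qf_smul, qf_diagonal]
      have hns : 0 < Complex.normSq c₀ := Complex.normSq_pos.mpr hc₀
      nlinarith
    obtain ⟨t, ht, hpsd⟩ := key_perturb hmin hCH hker
    set B : ℝ := (∑ j, |c j|) + 1 with hB
    have hBpos : 0 < B := by positivity
    have hcB : ∀ j, |c j| ≤ B := by
      intro j
      have h1 : |c j| ≤ ∑ j, |c j| :=
        Finset.single_le_sum (fun j _ => abs_nonneg (c j)) (Finset.mem_univ j)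
      simp only [hB]
      linarith
    set t' : ℝ := min t (lam / B) with ht'
    have ht'pos : 0 < t' := lt_min ht (by positivity)
    have ht't : t' ≤ t := min_le_left _ _
    set p : Fin m → ℝ := fun j => lam + t' * c j with hp
    have hpn : ∀ j, 0 ≤ p j := by
      intro j
      have h1 : t' * |c j| ≤ (lam / B) * B := by
        apply mul_le_mul (min_le_right _ _) (hcB j) (abs_nonneg _) (by positivity)
      rw [div_mul_cancel₀ _ hBpos.ne'] at h1
      have h2 : -(t' * |c j|) ≤ t' * c j := by nlinarith [neg_abs_le (c j), abs_nonneg (c j)]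
      simp only [hp]
      linarith
    have hM2 : ((Φᴴ * Φ) - diagonal (fun j => (p j : ℂ))).PosSemidef := by
      have hsplit : (Φᴴ * Φ) - diagonal (fun j => (p j : ℂ))
          = ((1 - t'/t : ℝ) : ℂ) • ((Φᴴ * Φ) - (lam : ℂ) • 1)
            + ((t'/t : ℝ) : ℂ) • (((Φᴴ * Φ) - (lam : ℂ) • 1) - (t : ℂ) • C) := by
        ext a b
        simp only [Matrix.sub_apply, Matrix.add_apply, Matrix.smul_apply, smul_eq_mul,
          Matrix.one_apply, hC, Matrix.diagonal_apply, hp]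
        by_cases hab : a = b <;> simp [hab] <;> push_cast <;> field_simp <;> ring
      rw [hsplit]
      refine Matrix.PosSemidef.add (psd_smul hmin ?_) (psd_smul hpsd ?_)
      · have : t' / t ≤ 1 := by
          rw [div_le_one ht]
          exact ht't
        linarith
      · positivity
    have hfeas := hopt p (primal_of_psd Φ hind p hpn hM2)
    have hsum : ∑ j, η j * p j = lam + t' * (∑ j, η j * c j) := by
      calc ∑ j, η j * p j = ∑ j, (η j * lam + t' * (η j * c j)) := by
            apply Finset.sum_congr rfl
            intro j _
            simp only [hp]
            ring
        _ = (∑ j, η j) * lam + t' * ∑ j, η j * c j := by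
            rw [Finset.sum_add_distrib, ← Finset.sum_mul, ← Finset.mul_sum]
        _ = lam + t' * ∑ j, η j * c j := by rw [hη1, one_mul]
    rw [hsum] at hfeas
    nlinarith
  -- Step B
  have stepB : ∀ c : Fin m → ℝ, (∑ j, c j * ‖u j‖ ^ 2) ≤ 0 → (∑ j, η j * c j) ≤ 0 := by
    intro c hc
    by_contra hcon
    push_neg at hcon
    set ε : ℝ := (∑ j, η j * c j) / 2 with hε
    have hεpos : 0 < ε := by positivity
    have h1 := stepA (fun j => c j - ε) ?_
    · have h2 : ∑ j, η j * (c j - ε) = (∑ j, η j * c j) - ε := by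
        calc ∑ j, η j * (c j - ε) = ∑ j, (η j * c j - ε * η j) := by
              apply Finset.sum_congr rfl; intro j _; ring
          _ = (∑ j, η j * c j) - ε * ∑ j, η j := by
              rw [Finset.sum_sub_distrib, ← Finset.mul_sum]
          _ = (∑ j, η j * c j) - ε := by rw [hη1, mul_one]
      rw [h2] at h1
      simp only [hε] at h1
      linarith
    · have h3 : ∑ j, (c j - ε) * ‖u j‖ ^ 2 = (∑ j, c j * ‖u j‖ ^ 2) - ε := by
        calc ∑ j, (c j - ε) * ‖u j‖ ^ 2
            = ∑ j, (c j * ‖u j‖ ^ 2 - ε * ‖u j‖ ^ 2) := by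
              apply Finset.sum_congr rfl; intro j _; ring
          _ = (∑ j, c j * ‖u j‖ ^ 2) - ε * ∑ j, ‖u j‖ ^ 2 := by
              rw [Finset.sum_sub_distrib, ← Finset.mul_sum]
          _ = (∑ j, c j * ‖u j‖ ^ 2) - ε := by rw [hu, mul_one]
      rw [h3]
      linarith
  -- Step C
  have hsum1 : ∑ j, ((if j = i then (1:ℝ) else 0) - ‖u i‖ ^ 2) * ‖u j‖ ^ 2 = 0 := by
    calc ∑ j, ((if j = i then (1:ℝ) else 0) - ‖u i‖ ^ 2) * ‖u j‖ ^ 2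
        = ∑ j, ((if j = i then ‖u j‖ ^ 2 else 0) - ‖u i‖ ^ 2 * ‖u j‖ ^ 2) := by
          apply Finset.sum_congr rfl; intro j _
          rcases eq_or_ne j i with hj | hj
          · simp only [if_pos hj]; ring
          · simp only [if_neg hj]; ring
      _ = ‖u i‖ ^ 2 - ‖u i‖ ^ 2 * ∑ j, ‖u j‖ ^ 2 := by
          rw [Finset.sum_sub_distrib, ← Finset.mul_sum, Finset.sum_ite_eq' Finset.univ i
            (fun j => ‖u j‖ ^ 2)]
          simp
      _ = 0 := by rw [hu]; ring
  have hsumη : ∀ s : ℝ, ∑ j, η j * ((if j = i then (1:ℝ) else 0) - s)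
      = η i - s := by
    intro s
    calc ∑ j, η j * ((if j = i then (1:ℝ) else 0) - s)
        = ∑ j, ((if j = i then η j else 0) - s * η j) := by
          apply Finset.sum_congr rfl; intro j _
          rcases eq_or_ne j i with hj | hj
          · simp only [if_pos hj]; ring
          · simp only [if_neg hj]; ring
      _ = η i - s * ∑ j, η j := by
          rw [Finset.sum_sub_distrib, ← Finset.mul_sum,
            Finset.sum_ite_eq' Finset.univ i (fun j => η j)]
          simp
      _ = η i - s := by rw [hη1, mul_one]
  have h1 := stepB (fun j => (if j = i then (1:ℝ) else 0) - ‖u i‖ ^ 2) (le_of_eq hsum1)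
  have h2 := stepB (fun j => ‖u i‖ ^ 2 - (if j = i then (1:ℝ) else 0)) ?_
  · rw [hsumη] at h1
    have h2' : ∑ j, η j * (‖u i‖ ^ 2 - (if j = i then (1:ℝ) else 0))
        = -(η i - ‖u i‖ ^ 2) := by
      rw [← hsumη (‖u i‖ ^ 2)]
      rw [← Finset.sum_neg_distrib]
      apply Finset.sum_congr rfl
      intro j _
      ring
    rw [h2'] at h2
    linarith
  · have : ∑ j, (‖u i‖ ^ 2 - (if j = i then (1:ℝ) else 0)) * ‖u j‖ ^ 2
        = -(∑ j, ((if j = i then (1:ℝ) else 0) - ‖u i‖ ^ 2) * ‖u j‖ ^ 2) := by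
      rw [← Finset.sum_neg_distrib]
      apply Finset.sum_congr rfl
      intro j _
      ring
    rw [this, hsum1]
    simp
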